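/- Let T be an invertible N×N matrix partitioned as [[A, B], [C, D]] with inverse [[P, Q], [R, S]] partitioned compatibly. Then the image of ker C under A equals ker R, i.e., A[ker C] = ker R. -/
import Mathlib


/-- For an invertible block 2×2 matrix `[[A,B],[C,D]]` with inverse
`[[P,Q],[R,S]]`, the image of `ker C` under `A` equals `ker R`. -/
theorem image_ker_eq_ker {F : Type*} [Field F] {ν₁ ν₂ μ₁ μ₂ : ℕ}
    (A : Matrix (Fin ν₁) (Fin μ₁) F) (B : Matrix (Fin ν₁) (Fin μ₂) F)
    (C : Matrix (Fin ν₂) (Fin μ₁) F) (D : Matrix (Fin ν₂) (Fin μ₂) F)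
    (P : Matrix (Fin μ₁) (Fin ν₁) F) (Q : Matrix (Fin μ₁) (Fin ν₂) F)
    (R : Matrix (Fin μ₂) (Fin ν₁) F) (S : Matrix (Fin μ₂) (Fin ν₂) F)
    (h1 : Matrix.fromBlocks A B C D * Matrix.fromBlocks P Q R S = 1)
    (h2 : Matrix.fromBlocks P Q R S * Matrix.fromBlocks A B C D = 1) :
    Submodule.map A.mulVecLin (LinearMap.ker C.mulVecLin) =
      LinearMap.ker R.mulVecLin := by
  rw [Matrix.fromBlocks_multiply, ← Matrix.fromBlocks_one] at h1 h2
  have hRA : R * A + S * C = 0 := by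
    have := congrArg Matrix.toBlocks₂₁ h2
    simpa only [Matrix.toBlocks_fromBlocks₂₁] using this
  have hAP : A * P + B * R = 1 := by
    have := congrArg Matrix.toBlocks₁₁ h1
    simpa only [Matrix.toBlocks_fromBlocks₁₁] using this
  have hCP : C * P + D * R = 0 := by
    have := congrArg Matrix.toBlocks₂₁ h1
    simpa only [Matrix.toBlocks_fromBlocks₂₁] using this
  ext y
  simp only [Submodule.mem_map, LinearMap.mem_ker, Matrix.mulVecLin_apply]
  constructor
  · rintro ⟨x, hx, rfl⟩
    have : (R * A + S * C).mulVec x = 0 := by rw [hRA, Matrix.zero_mulVec]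
    simpa [Matrix.add_mulVec, ← Matrix.mulVec_mulVec, hx] using this
  · intro hy
    refine ⟨P.mulVec y, ?_, ?_⟩
    · have : (C * P + D * R).mulVec y = 0 := by rw [hCP, Matrix.zero_mulVec]
      simpa [Matrix.add_mulVec, ← Matrix.mulVec_mulVec, hy] using this
    · have : (A * P + B * R).mulVec y = y := by rw [hAP, Matrix.one_mulVec]
      simpa [Matrix.add_mulVec, ← Matrix.mulVec_mulVec, hy] using this
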